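/- Activation criterion: let σ be a state on ℂ^d⊗ℂ^d and ρ a state on (ℂ^d⊗ℂ²)⊗(ℂ^d⊗ℂ²) (bipartite with A-side ℂ^d⊗ℂ² and B-side ℂ^d⊗ℂ²). If tr[ρ (σ^T ⊗ (I₄/2 − φ₂))] < 0, where σ^T ⊗ (I₄/2 − φ₂) is regrouped to act on (ℂ^d⊗ℂ²)⊗(ℂ^d⊗ℂ²) matching ρ, then the joint state σ⊗ρ, regrouped as a bipartite state across the cut joining both A-parts against both B-parts, is single-copy distillable: F₂(σ⊗ρ) > 1/2. -/

import Mathlib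

open scoped BigOperators ComplexOrder
open Matrix MeasureTheory

noncomputable section

/-- A quantum state: a positive semidefinite complex matrix of unit trace. -/
def IsState {n : Type} [Fintype n] (M : Matrix n n ℂ) : Prop :=
  M.PosSemidef ∧ M.trace = 1

/-- Kronecker product of rectangular complex matrices. -/
def kron {I J K L : Type} (A : Matrix I J ℂ) (B : Matrix K L ℂ) :
    Matrix (I × K) (J × L) ℂ :=
  Matrix.of fun p q => A p.1 q.1 * B p.2 q.2

/-- The projector onto the maximally entangled vector `(1/√D) ∑ᵢ |i,i⟩`. -/
def phiD (D : ℕ) : Matrix (Fin D × Fin D) (Fin D × Fin D) ℂ :=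
  Matrix.of fun p q => if p.1 = p.2 ∧ q.1 = q.2 then (1 / (D : ℂ)) else 0

/-- Single-copy undistillability (trace form):
`tr[(A ⊗ B) ω (A ⊗ B)† (φ₂ − I₄/2)] ≤ 0` for all 2 × m matrices A, B. -/
def SingleCopyUndistillable {I : Type} [Fintype I] [DecidableEq I]
    (ω : Matrix (I × I) (I × I) ℂ) : Prop :=
  ∀ A B : Matrix (Fin 2) I ℂ,
    (Matrix.trace (kron A B * ω * (kron A B)ᴴ * (phiD 2 - (1 / 2 : ℂ) • 1))).re ≤ 0

/-- The SLOCC `D`-dimensional singlet fraction. -/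
def singletFraction (D : ℕ) {I : Type} [Fintype I] [DecidableEq I]
    (ω : Matrix (I × I) (I × I) ℂ) : ℝ :=
  sSup {r : ℝ | ∃ A B : Matrix (Fin D) I ℂ,
    Matrix.trace (kron A B * ω * (kron A B)ᴴ) ≠ 0 ∧
    r = (Matrix.trace (kron A B * ω * (kron A B)ᴴ * phiD D)).re /
        (Matrix.trace (kron A B * ω * (kron A B)ᴴ)).re}

/-- Single-copy undistillability, singlet-fraction form: `F₂(ω) = 1/2`. -/
def SingleCopyUndistillableF {I : Type} [Fintype I] [DecidableEq I]
    (ω : Matrix (I × I) (I × I) ℂ) : Prop :=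
  singletFraction 2 ω = 1 / 2

/-- `n`-fold tensor power of a bipartite state, with all A-factors grouped on one
side and all B-factors on the other. -/
def tensorPow {ι : Type} [Fintype ι] (ρ : Matrix (ι × ι) (ι × ι) ℂ) (n : ℕ) :
    Matrix ((Fin n → ι) × (Fin n → ι)) ((Fin n → ι) × (Fin n → ι)) ℂ :=
  Matrix.of fun x y => ∏ i : Fin n, ρ (x.1 i, x.2 i) (y.1 i, y.2 i)

/-- Permutation symmetry of a state on `ℋ^{⊗k}`: `P_π ω P_π = ω` for every `π ∈ S_k`,
expressed entrywise. -/
def PermSymmetric {ι : Type} {k : ℕ}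
    (ω : Matrix ((Fin k → ι) × (Fin k → ι)) ((Fin k → ι) × (Fin k → ι)) ℂ) : Prop :=
  ∀ (π : Equiv.Perm (Fin k)) x y,
    ω (x.1 ∘ π, x.2 ∘ π) (y.1 ∘ π, y.2 ∘ π) = ω x y

def fillAt {ι : Type} {k : ℕ} (m : Fin k) (a : ι)
    (r : {i : Fin k // i ≠ m} → ι) : Fin k → ι :=
  fun i => if h : i = m then a else r ⟨i, h⟩

/-- Partial trace over all bipartite factors except the `m`-th one. -/
def reduceAt {ι : Type} [Fintype ι] {k : ℕ} (m : Fin k)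
    (ω : Matrix ((Fin k → ι) × (Fin k → ι)) ((Fin k → ι) × (Fin k → ι)) ℂ) :
    Matrix (ι × ι) (ι × ι) ℂ :=
  Matrix.of fun p q =>
    ∑ rA : {i : Fin k // i ≠ m} → ι, ∑ rB : {i : Fin k // i ≠ m} → ι,
      ω (fillAt m p.1 rA, fillAt m p.2 rB) (fillAt m q.1 rA, fillAt m q.2 rB)

/-- Copy-correlated `k`-undistillability (trace form of single-copy undistillability):
there is a permutation-symmetric single-copy-undistillable extension on `ℋ^{⊗k}`
whose reduction to the first bipartite factor is `ρ`. -/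
def CopyCorrKUndistillable (ι : Type) [Fintype ι] [DecidableEq ι] (k : ℕ) (hk : 0 < k)
    (ρ : Matrix (ι × ι) (ι × ι) ℂ) : Prop :=
  ∃ ω : Matrix ((Fin k → ι) × (Fin k → ι)) ((Fin k → ι) × (Fin k → ι)) ℂ,
    IsState ω ∧ PermSymmetric ω ∧ SingleCopyUndistillable ω ∧
      reduceAt (⟨0, hk⟩ : Fin k) ω = ρ

/-- Copy-correlated `k`-undistillability (singlet-fraction form). -/
def CopyCorrKUndistillableF (ι : Type) [Fintype ι] [DecidableEq ι] (k : ℕ) (hk : 0 < k)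
    (ρ : Matrix (ι × ι) (ι × ι) ℂ) : Prop :=
  ∃ ω : Matrix ((Fin k → ι) × (Fin k → ι)) ((Fin k → ι) × (Fin k → ι)) ℂ,
    IsState ω ∧ PermSymmetric ω ∧ SingleCopyUndistillableF ω ∧
      reduceAt (⟨0, hk⟩ : Fin k) ω = ρ

/-- Dual cone of a set of matrices, inside the Hermitian matrices. -/
def dualCone {n : Type} [Fintype n] (M : Set (Matrix n n ℂ)) : Set (Matrix n n ℂ) :=
  {X | X.IsHermitian ∧ ∀ ρ ∈ M, 0 ≤ (Matrix.trace (X * ρ)).re}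

/-- Separability: membership in the closed convex hull of the product states. -/
def SeparableState {ι : Type} [Fintype ι] (σ : Matrix (ι × ι) (ι × ι) ℂ) : Prop :=
  σ ∈ closure (convexHull ℝ
    {M : Matrix (ι × ι) (ι × ι) ℂ | ∃ α β : Matrix ι ι ℂ,
      IsState α ∧ IsState β ∧ M = kron α β})

open scoped MatrixOrder in
/-- Trace norm `‖X‖₁ = tr √(X†X)`. -/
def traceNorm {n : Type} [Fintype n] [DecidableEq n] (X : Matrix n n ℂ) : ℝ :=
  (CFC.sqrt (Xᴴ * X)).trace.re

/-- Symmetrization `Ŝ_k(Q) = (1/k!) ∑_{π ∈ S_k} P_π Q P_π`. -/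
def symmetrize {ι : Type} {k : ℕ}
    (Q : Matrix ((Fin k → ι) × (Fin k → ι)) ((Fin k → ι) × (Fin k → ι)) ℂ) :
    Matrix ((Fin k → ι) × (Fin k → ι)) ((Fin k → ι) × (Fin k → ι)) ℂ :=
  (1 / (Nat.factorial k : ℂ)) •
    ∑ π : Equiv.Perm (Fin k),
      Matrix.of fun x y => Q (x.1 ∘ π, x.2 ∘ π) (y.1 ∘ π, y.2 ∘ π)


instance matMeasurableSpace {m n : Type} [Fintype m] [Fintype n] :
    MeasurableSpace (Matrix m n ℂ) := borel _

/-- Partial trace over the last `n − k` bipartite factors. -/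
def traceTail {ι : Type} [Fintype ι] {n k : ℕ} (h : k ≤ n)
    (ω : Matrix ((Fin n → ι) × (Fin n → ι)) ((Fin n → ι) × (Fin n → ι)) ℂ) :
    Matrix ((Fin k → ι) × (Fin k → ι)) ((Fin k → ι) × (Fin k → ι)) ℂ :=
  Matrix.of fun x y =>
    ∑ tA : Fin (n - k) → ι, ∑ tB : Fin (n - k) → ι,
      ω (fun i => Fin.append x.1 tA (Fin.cast (by omega) i),
         fun i => Fin.append x.2 tB (Fin.cast (by omega) i))
        (fun i => Fin.append y.1 tA (Fin.cast (by omega) i),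
         fun i => Fin.append y.2 tB (Fin.cast (by omega) i))

/-- Partial trace over the last bipartite factor. -/
def traceLast {ι : Type} [Fintype ι] {k : ℕ}
    (ω : Matrix ((Fin (k + 1) → ι) × (Fin (k + 1) → ι))
      ((Fin (k + 1) → ι) × (Fin (k + 1) → ι)) ℂ) :
    Matrix ((Fin k → ι) × (Fin k → ι)) ((Fin k → ι) × (Fin k → ι)) ℂ :=
  Matrix.of fun x y => ∑ a : ι, ∑ b : ι,
    ω (Fin.snoc x.1 a, Fin.snoc x.2 b) (Fin.snoc y.1 a, Fin.snoc y.2 b)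

/-- `X ⊗ I^{⊗(k−1)}`: the operator acting as `X` on the first bipartite factor
and as the identity on the remaining `k − 1` factors. -/
def firstFactorOp {ι : Type} [DecidableEq ι] (k : ℕ) (hk : 0 < k)
    (X : Matrix (ι × ι) (ι × ι) ℂ) :
    Matrix ((Fin k → ι) × (Fin k → ι)) ((Fin k → ι) × (Fin k → ι)) ℂ :=
  Matrix.of fun x y =>
    X (x.1 ⟨0, hk⟩, x.2 ⟨0, hk⟩) (y.1 ⟨0, hk⟩, y.2 ⟨0, hk⟩) *
      ∏ i : Fin k, if i = ⟨0, hk⟩ then 1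
        else (if x.1 i = y.1 i ∧ x.2 i = y.2 i then 1 else 0)

/-- `⟨φ| ⊗ I₂` with `|φ⟩ = ∑ᵢ |i,i⟩` the unnormalized maximally entangled vector. -/
def jamA (d : ℕ) : Matrix (Fin 2) ((Fin d × Fin d) × Fin 2) ℂ :=
  Matrix.of fun s p => (if p.1.1 = p.1.2 then (1 : ℂ) else 0) * (if s = p.2 then 1 else 0)

/-- `σ ⊗ ρ` with tensor factors ordered as `((A₂A₁A₃), (B₂B₁B₃))`. -/
def jamState (d : ℕ) (σ : Matrix (Fin d × Fin d) (Fin d × Fin d) ℂ)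
    (ρ : Matrix ((Fin d × Fin 2) × (Fin d × Fin 2))
      ((Fin d × Fin 2) × (Fin d × Fin 2)) ℂ) :
    Matrix (((Fin d × Fin d) × Fin 2) × ((Fin d × Fin d) × Fin 2))
      (((Fin d × Fin d) × Fin 2) × ((Fin d × Fin d) × Fin 2)) ℂ :=
  Matrix.of fun x y =>
    σ (x.1.1.1, x.2.1.1) (y.1.1.1, y.2.1.1) *
      ρ ((x.1.1.2, x.1.2), (x.2.1.2, x.2.2)) ((y.1.1.2, y.1.2), (y.2.1.2, y.2.2))

/-- Joint operator `ρ ⊗ σ`, regrouped as a bipartite operator across the cut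
joining both A-parts against both B-parts. -/
def jointState {ι κ : Type} (ρ : Matrix (ι × ι) (ι × ι) ℂ)
    (σ : Matrix (κ × κ) (κ × κ) ℂ) :
    Matrix ((ι × κ) × (ι × κ)) ((ι × κ) × (ι × κ)) ℂ :=
  Matrix.of fun x y =>
    ρ (x.1.1, x.2.1) (y.1.1, y.2.1) * σ (x.1.2, x.2.2) (y.1.2, y.2.2)


/-! ### Auxiliary lemmas for the activation criterion -/

section ActivationAux

lemma psd_trace_nonneg' {n : Type} [Fintype n] [DecidableEq n] {M : Matrix n n ℂ}
    (hM : M.PosSemidef) : 0 ≤ Matrix.trace M := by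
  exact hM.trace_nonneg

open scoped MatrixOrder in
lemma psd_trace_mul_nonneg' {n : Type} [Fintype n] [DecidableEq n] {P Q : Matrix n n ℂ}
    (hP : P.PosSemidef) (hQ : Q.PosSemidef) : 0 ≤ Matrix.trace (P * Q) := by
  set S := CFC.sqrt Q with hSdef
  have hs : S * S = Q := CFC.sqrt_mul_sqrt_self Q hQ.nonneg
  have hherm : Sᴴ = S := (CFC.sqrt_nonneg Q).posSemidef.isHermitian.eq
  have h1 : Matrix.trace (P * Q) = Matrix.trace (Sᴴ * P * S) := by
    conv_lhs => rw [← hs]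
    rw [hherm, ← mul_assoc, Matrix.trace_mul_cycle]
  rw [h1]
  exact psd_trace_nonneg' (hP.conjTranspose_mul_mul_same _)

lemma psd_of_proj' {n : Type} [Fintype n] {M : Matrix n n ℂ}
    (h1 : M.IsHermitian) (h2 : M * M = M) : M.PosSemidef := by
  have h3 : M = Mᴴ * M := by rw [h1.eq]; exact h2.symm
  rw [h3]; exact Matrix.posSemidef_conjTranspose_mul_self M

lemma phiD_herm' : (phiD 2).IsHermitian := by
  ext ⟨a, b⟩ ⟨c, e⟩
  simp only [phiD, Matrix.conjTranspose_apply, Matrix.of_apply]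
  by_cases h1 : a = b <;> by_cases h2 : c = e <;>
    simp [h1, h2, RCLike.star_def, map_div₀]

lemma phiD_idem' : phiD 2 * phiD 2 = phiD 2 := by
  ext ⟨a, b⟩ ⟨c, e⟩
  simp only [phiD, Matrix.mul_apply, Matrix.of_apply, Fintype.sum_prod_type,
    Fin.sum_univ_two, ite_and, ite_mul, mul_ite, zero_mul, mul_zero]
  by_cases h1 : a = b <;> by_cases h2 : c = e <;> simp [h1, h2] <;> norm_num

lemma phiD_psd' : (phiD 2).PosSemidef := psd_of_proj' phiD_herm' phiD_idem'

lemma one_sub_phiD_psd' : (1 - phiD 2).PosSemidef := by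
  refine psd_of_proj' (Matrix.isHermitian_one.sub phiD_herm') ?_
  rw [sub_mul, one_mul, mul_sub, mul_one, phiD_idem', sub_self, sub_zero]

lemma kron_conjTranspose' {I J K L : Type} (A : Matrix I J ℂ) (B : Matrix K L ℂ) :
    (kron A B)ᴴ = kron Aᴴ Bᴴ := by
  ext ⟨j, l⟩ ⟨i, k⟩
  simp [kron, Matrix.conjTranspose_apply, star_mul', mul_comm]

lemma kron_mul' {I J K I' J' K' : Type} [Fintype J] [Fintype J']
    (A : Matrix I J ℂ) (B : Matrix J K ℂ) (C : Matrix I' J' ℂ) (D : Matrix J' K' ℂ) :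
    kron (A * B) (C * D) = kron A C * kron B D := by
  ext ⟨i, k⟩ ⟨j, l⟩
  simp only [kron, Matrix.mul_apply, Matrix.of_apply, Fintype.sum_prod_type,
    Finset.sum_mul_sum]
  exact Finset.sum_congr rfl fun a _ => Finset.sum_congr rfl fun b _ => by ring

open scoped MatrixOrder in
lemma kron_psd' {I K : Type} [Fintype I] [Fintype K] [DecidableEq I] [DecidableEq K]
    {A : Matrix I I ℂ} {B : Matrix K K ℂ}
    (hA : A.PosSemidef) (hB : B.PosSemidef) : (kron A B).PosSemidef := by
  obtain ⟨C, rfl⟩ := CStarAlgebra.nonneg_iff_eq_star_mul_self.mp hA.nonneg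
  obtain ⟨D, rfl⟩ := CStarAlgebra.nonneg_iff_eq_star_mul_self.mp hB.nonneg
  simp only [Matrix.star_eq_conjTranspose]
  rw [kron_mul', ← kron_conjTranspose']
  exact Matrix.posSemidef_conjTranspose_mul_self _

lemma jointState_psd' {ι κ : Type} [Fintype ι] [Fintype κ] [DecidableEq ι] [DecidableEq κ]
    {A : Matrix (ι × ι) (ι × ι) ℂ} {B : Matrix (κ × κ) (κ × κ) ℂ}
    (hA : A.PosSemidef) (hB : B.PosSemidef) : (jointState A B).PosSemidef := by
  have h := (kron_psd' hA hB).submatrix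
    (fun x : (ι × κ) × (ι × κ) => ((x.1.1, x.2.1), (x.1.2, x.2.2)))
  convert h using 2
  ext x y
  rfl

/-- The local filtering operator `⟨φ_d| ⊗ I₂` in the regrouped indexing. -/
def AAct (d : ℕ) : Matrix (Fin 2) (Fin d × (Fin d × Fin 2)) ℂ :=
  Matrix.of fun s p => (if p.1 = p.2.1 then 1 else 0) * (if s = p.2.2 then 1 else 0)

variable {d : ℕ}

lemma AAct_L1 (W : Matrix ((Fin d × (Fin d × Fin 2)) × (Fin d × (Fin d × Fin 2)))
      ((Fin d × (Fin d × Fin 2)) × (Fin d × (Fin d × Fin 2))) ℂ)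
    (p : Fin 2 × Fin 2) (y) :
    (kron (AAct d) (AAct d) * W) p y =
      ∑ i : Fin d, ∑ i' : Fin d, W ((i, (i, p.1)), (i', (i', p.2))) y := by
  simp [Matrix.mul_apply, kron, AAct, Fintype.sum_prod_type, ite_mul, mul_ite,
    mul_one, mul_zero, zero_mul, Finset.sum_ite_eq, Finset.sum_ite_eq']
  refine Finset.sum_congr rfl fun i _ => ?_
  rw [Finset.sum_comm]
  simp

lemma AAct_L2
    (M : Matrix (Fin 2 × Fin 2) ((Fin d × (Fin d × Fin 2)) × (Fin d × (Fin d × Fin 2))) ℂ)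
    (p q : Fin 2 × Fin 2) :
    (M * (kron (AAct d) (AAct d))ᴴ) p q =
      ∑ k : Fin d, ∑ k' : Fin d, M p ((k, (k, q.1)), (k', (k', q.2))) := by
  simp [Matrix.mul_apply, kron, AAct, Matrix.conjTranspose_apply, Fintype.sum_prod_type,
    ite_mul, mul_ite, mul_one, mul_zero, zero_mul, star_mul', apply_ite (starRingEnd ℂ),
    Finset.sum_ite_eq, Finset.sum_ite_eq']
  refine Finset.sum_congr rfl fun k _ => ?_
  rw [Finset.sum_comm]
  simp

lemma AAct_Pentry (σ : Matrix (Fin d × Fin d) (Fin d × Fin d) ℂ)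
    (ρ : Matrix ((Fin d × Fin 2) × (Fin d × Fin 2)) ((Fin d × Fin 2) × (Fin d × Fin 2)) ℂ)
    (p q : Fin 2 × Fin 2) :
    (kron (AAct d) (AAct d) * jointState σ ρ * (kron (AAct d) (AAct d))ᴴ) p q =
      ∑ c : (Fin d × Fin d) × (Fin d × Fin d),
        σ c.2 c.1 * ρ ((c.2.1, p.1), (c.2.2, p.2)) ((c.1.1, q.1), (c.1.2, q.2)) := by
  rw [AAct_L2]
  simp only [AAct_L1, jointState, Matrix.of_apply, Fintype.sum_prod_type]

lemma traceMul' {n : Type} [Fintype n] (A B : Matrix n n ℂ) :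
    Matrix.trace (A * B) = ∑ z : n × n, A z.1 z.2 * B z.2 z.1 := by
  simp [Matrix.trace, Matrix.diag, Matrix.mul_apply, Fintype.sum_prod_type]

/-- Index regrouping used to match the two traces. -/
def regroup' (d : ℕ) :
    ((Fin 2 × Fin 2) × (Fin 2 × Fin 2)) × ((Fin d × Fin d) × (Fin d × Fin d)) ≃
      (((Fin d × Fin 2) × (Fin d × Fin 2)) × ((Fin d × Fin 2) × (Fin d × Fin 2))) where
  toFun x := (((x.2.2.1, x.1.1.1), (x.2.2.2, x.1.1.2)),
    ((x.2.1.1, x.1.2.1), (x.2.1.2, x.1.2.2)))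
  invFun z := (((z.1.1.2, z.1.2.2), (z.2.1.2, z.2.2.2)),
    ((z.2.1.1, z.2.2.1), (z.1.1.1, z.1.2.1)))
  left_inv := by rintro ⟨⟨⟨s, t⟩, ⟨s', t'⟩⟩, ⟨⟨k, k'⟩, ⟨i, i'⟩⟩⟩; rfl
  right_inv := by rintro ⟨⟨⟨i, s⟩, ⟨i', t⟩⟩, ⟨⟨k, s'⟩, ⟨k', t'⟩⟩⟩; rfl

lemma key_trace (σ : Matrix (Fin d × Fin d) (Fin d × Fin d) ℂ)
    (ρ : Matrix ((Fin d × Fin 2) × (Fin d × Fin 2)) ((Fin d × Fin 2) × (Fin d × Fin 2)) ℂ)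
    (X : Matrix (Fin 2 × Fin 2) (Fin 2 × Fin 2) ℂ) :
    Matrix.trace (kron (AAct d) (AAct d) * jointState σ ρ * (kron (AAct d) (AAct d))ᴴ * X) =
      Matrix.trace (ρ * jointState σ.transpose X) := by
  rw [traceMul', traceMul']
  simp only [AAct_Pentry, Finset.sum_mul]
  have hG : (∑ z : ((Fin d × Fin 2) × Fin d × Fin 2) × (Fin d × Fin 2) × Fin d × Fin 2,
      ρ z.1 z.2 * jointState σ.transpose X z.2 z.1) =
      ∑ x, ρ ((regroup' d) x).1 ((regroup' d) x).2 *
        jointState σ.transpose X ((regroup' d) x).2 ((regroup' d) x).1 :=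
    (Fintype.sum_equiv (regroup' d)
      (fun x => ρ ((regroup' d) x).1 ((regroup' d) x).2 *
        jointState σ.transpose X ((regroup' d) x).2 ((regroup' d) x).1)
      (fun z => ρ z.1 z.2 * jointState σ.transpose X z.2 z.1) fun x => rfl).symm
  rw [hG]
  conv_rhs => rw [Fintype.sum_prod_type]
  refine Finset.sum_congr rfl fun w _ => Finset.sum_congr rfl fun c _ => ?_
  obtain ⟨⟨s, t⟩, ⟨s', t'⟩⟩ := w
  obtain ⟨⟨k, k'⟩, ⟨i, i'⟩⟩ := c
  simp only [regroup', Equiv.coe_fn_mk, jointState, Matrix.of_apply, Matrix.transpose_apply]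
  ring

lemma jointState_neg' {ι κ : Type} (A : Matrix (ι × ι) (ι × ι) ℂ)
    (B : Matrix (κ × κ) (κ × κ) ℂ) :
    jointState A (-B) = - jointState A B := by
  ext x y
  simp [jointState]

lemma re_pos_of_nonneg_ne_zero {z : ℂ} (h1 : 0 ≤ z) (h2 : z ≠ 0) : 0 < z.re := by
  rw [Complex.le_def] at h1
  rcases lt_or_eq_of_le h1.1 with h | h
  · simpa using h
  · exact absurd (Complex.ext h.symm (by simpa using h1.2.symm)) h2

end ActivationAux

/-- **Activation criterion:** if `tr[ρ (σ^T ⊗ (I₄/2 − φ₂))] < 0`, then the joint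
state `σ ⊗ ρ` is single-copy distillable: `F₂(σ ⊗ ρ) > 1/2`. -/
theorem activation_criterion (d : ℕ)
    (σ : Matrix (Fin d × Fin d) (Fin d × Fin d) ℂ) (hσ : IsState σ)
    (ρ : Matrix ((Fin d × Fin 2) × (Fin d × Fin 2))
      ((Fin d × Fin 2) × (Fin d × Fin 2)) ℂ) (hρ : IsState ρ)
    (h : (Matrix.trace (ρ *
        jointState σ.transpose ((1 / 2 : ℂ) • 1 - phiD 2))).re < 0) :
    1 / 2 < singletFraction 2 (jointState σ ρ) := by
  classical
  have hωpsd : (jointState σ ρ).PosSemidef := jointState_psd' hσ.1 hρ.1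
  set M := kron (AAct d) (AAct d) * jointState σ ρ * (kron (AAct d) (AAct d))ᴴ with hMdef
  have hMpsd : M.PosSemidef := hωpsd.mul_mul_conjTranspose_same _
  have hN : 0 ≤ Matrix.trace (M * phiD 2) := psd_trace_mul_nonneg' hMpsd phiD_psd'
  have hND : 0 ≤ Matrix.trace (M * (1 - phiD 2)) :=
    psd_trace_mul_nonneg' hMpsd one_sub_phiD_psd'
  have hT : 0 ≤ Matrix.trace M := psd_trace_nonneg' hMpsd
  -- the key trace identity
  have hkey : Matrix.trace (M * (phiD 2 - (1 / 2 : ℂ) • 1)) =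
      - Matrix.trace (ρ * jointState σ.transpose ((1 / 2 : ℂ) • 1 - phiD 2)) := by
    rw [hMdef, key_trace σ ρ (phiD 2 - (1 / 2 : ℂ) • 1),
      show (phiD 2 - (1 / 2 : ℂ) • 1) = -((1 / 2 : ℂ) • 1 - phiD 2) by rw [neg_sub],
      jointState_neg', mul_neg, Matrix.trace_neg]
  have hpos : 0 < (Matrix.trace (M * (phiD 2 - (1 / 2 : ℂ) • 1))).re := by
    rw [hkey]
    simpa using h
  -- split the trace
  have hsplit : (Matrix.trace (M * (phiD 2 - (1 / 2 : ℂ) • 1))).re =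
      (Matrix.trace (M * phiD 2)).re - (Matrix.trace M).re / 2 := by
    rw [mul_sub, Matrix.trace_sub, Matrix.mul_smul, Matrix.trace_smul, mul_one,
      Complex.sub_re, smul_eq_mul, Complex.mul_re]
    norm_num
    ring
  have hDN : (Matrix.trace (M * phiD 2)).re ≤ (Matrix.trace M).re := by
    have h1 : Matrix.trace (M * (1 - phiD 2)) = Matrix.trace M - Matrix.trace (M * phiD 2) := by
      rw [mul_sub, Matrix.trace_sub, mul_one]
    rw [h1, Complex.le_def] at hND
    have := hND.1
    simp only [Complex.zero_re, Complex.sub_re] at this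
    linarith
  have hNr0 : 0 ≤ (Matrix.trace (M * phiD 2)).re := by
    rw [Complex.le_def] at hN
    simpa using hN.1
  have hhalf : (Matrix.trace M).re / 2 < (Matrix.trace (M * phiD 2)).re := by
    rw [hsplit] at hpos; linarith
  have hDrpos : 0 < (Matrix.trace M).re := by linarith
  have htr_ne : Matrix.trace M ≠ 0 := by
    intro h0
    rw [h0] at hDrpos
    simp at hDrpos
  -- the candidate value
  have hmem : (Matrix.trace (M * phiD 2)).re / (Matrix.trace M).re ∈
      {r : ℝ | ∃ A B : Matrix (Fin 2) (Fin d × (Fin d × Fin 2)) ℂ,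
        Matrix.trace (kron A B * jointState σ ρ * (kron A B)ᴴ) ≠ 0 ∧
        r = (Matrix.trace (kron A B * jointState σ ρ * (kron A B)ᴴ * phiD 2)).re /
            (Matrix.trace (kron A B * jointState σ ρ * (kron A B)ᴴ)).re} :=
    ⟨AAct d, AAct d, htr_ne, rfl⟩
  have hbdd : BddAbove {r : ℝ | ∃ A B : Matrix (Fin 2) (Fin d × (Fin d × Fin 2)) ℂ,
      Matrix.trace (kron A B * jointState σ ρ * (kron A B)ᴴ) ≠ 0 ∧
      r = (Matrix.trace (kron A B * jointState σ ρ * (kron A B)ᴴ * phiD 2)).re /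
          (Matrix.trace (kron A B * jointState σ ρ * (kron A B)ᴴ)).re} := by
    refine ⟨1, fun r hr => ?_⟩
    obtain ⟨A, B, hne, rfl⟩ := hr
    set M' := kron A B * jointState σ ρ * (kron A B)ᴴ with hM'def
    have hM'psd : M'.PosSemidef := hωpsd.mul_mul_conjTranspose_same _
    have hT' : 0 < (Matrix.trace M').re :=
      re_pos_of_nonneg_ne_zero (psd_trace_nonneg' hM'psd) hne
    have hND' : 0 ≤ Matrix.trace (M' * (1 - phiD 2)) :=
      psd_trace_mul_nonneg' hM'psd one_sub_phiD_psd'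
    have hDN' : (Matrix.trace (M' * phiD 2)).re ≤ (Matrix.trace M').re := by
      have h1 : Matrix.trace (M' * (1 - phiD 2)) =
          Matrix.trace M' - Matrix.trace (M' * phiD 2) := by
        rw [mul_sub, Matrix.trace_sub, mul_one]
      rw [h1, Complex.le_def] at hND'
      have := hND'.1
      simp only [Complex.zero_re, Complex.sub_re] at this
      linarith
    exact div_le_one_of_le₀ hDN' hT'.le
  have hlt : 1 / 2 < (Matrix.trace (M * phiD 2)).re / (Matrix.trace M).re := by
    rw [lt_div_iff₀ hDrpos]
    linarith
  exact lt_of_lt_of_le hlt (le_csSup hbdd hmem)
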